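/- arXiv:math-ph/0703058 — 3 statements merged into one kernel-verified Lean document; each statement's English description precedes it below -/
import Mathlib

section
/- Kreĭn's formula: Let Λ be a finite index set, Δ ⊆ Λ, let H̃ be a Hermitian matrix in Matrix Λ Λ ℂ, and let V_Δ be a real diagonal matrix supported on Δ (i.e., V_Δ(x,x) = 0 for x ∉ Δ). Set H_Λ = H̃ + V_Δ. For z ∈ ℂ with Im z > 0, let g_Δ(z) be the Δ×Δ submatrix of (H_Λ − z·1)⁻¹ and g̃_Δ(z) the Δ×Δ submatrix of (H̃ − z·1)⁻¹. Then g̃_Δ(z) is invertible and g_Δ(z) = ( V_Δ|_Δ + g̃_Δ(z)⁻¹ )⁻¹, where V_Δ|_Δ is the Δ×Δ diagonal block of V_Δ. -/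
open Matrix

section Aux
variable {Λ : Type*} [Fintype Λ] [DecidableEq Λ]

lemma aux_isUnit_of_ker (M : Matrix Λ Λ ℂ) (h : ∀ v, M *ᵥ v = 0 → v = 0) :
    IsUnit M := by
  rw [Matrix.isUnit_iff_isUnit_det, isUnit_iff_ne_zero]
  intro hd
  obtain ⟨v, hv, hMv⟩ := Matrix.exists_mulVec_eq_zero_iff.mpr hd
  exact hv (h v hMv)

omit [DecidableEq Λ] in
lemma aux_herm_im (H : Matrix Λ Λ ℂ) (hH : H.IsHermitian) (v : Λ → ℂ) :
    (star v ⬝ᵥ H *ᵥ v).im = 0 := by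
  have h1 : star v ⬝ᵥ H *ᵥ v = star (star v ⬝ᵥ H *ᵥ v) := by
    calc star v ⬝ᵥ H *ᵥ v = star (star (H *ᵥ v) ⬝ᵥ v) := star_dotProduct _ _
      _ = star (star v ᵥ* Hᴴ ⬝ᵥ v) := by rw [star_mulVec]
      _ = star (star v ⬝ᵥ Hᴴ *ᵥ v) := by rw [dotProduct_mulVec]
      _ = star (star v ⬝ᵥ H *ᵥ v) := by rw [hH.eq]
  exact Complex.conj_eq_iff_im.mp h1.symm

omit [DecidableEq Λ] in
lemma aux_self (v : Λ → ℂ) :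
    star v ⬝ᵥ v = ((∑ i, Complex.normSq (v i) : ℝ) : ℂ) := by
  push_cast
  simp only [dotProduct, Pi.star_apply]
  exact Finset.sum_congr rfl fun i _ => (Complex.normSq_eq_conj_mul_self).symm

omit [DecidableEq Λ] in
lemma aux_self_im (v : Λ → ℂ) : (star v ⬝ᵥ v).im = 0 := by
  rw [aux_self]; simp

omit [DecidableEq Λ] in
lemma aux_self_re_pos {v : Λ → ℂ} (hv : v ≠ 0) : 0 < (star v ⬝ᵥ v).re := by
  rw [aux_self]
  simp only [Complex.ofReal_re]
  obtain ⟨i, hi⟩ := Function.ne_iff.mp hv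
  exact Finset.sum_pos' (fun i _ => Complex.normSq_nonneg _)
    ⟨i, Finset.mem_univ i, Complex.normSq_pos.mpr hi⟩

lemma aux_quad_im (H : Matrix Λ Λ ℂ) (hH : H.IsHermitian) (z : ℂ) (v : Λ → ℂ) :
    (star v ⬝ᵥ (H - z • 1) *ᵥ v).im = -z.im * (star v ⬝ᵥ v).re := by
  rw [sub_mulVec, dotProduct_sub, smul_mulVec, one_mulVec, dotProduct_smul]
  simp [Complex.sub_im, Complex.mul_im, aux_herm_im H hH v, aux_self_im v]

lemma aux_resolvent_unit (H : Matrix Λ Λ ℂ) (hH : H.IsHermitian) (z : ℂ)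
    (hz : 0 < z.im) : IsUnit (H - z • (1 : Matrix Λ Λ ℂ)) := by
  apply aux_isUnit_of_ker
  intro v hv
  by_contra h
  have h1 := aux_quad_im H hH z v
  rw [hv, dotProduct_zero] at h1
  have h2 := aux_self_re_pos h
  simp only [Complex.zero_im] at h1
  nlinarith

lemma aux_inv_quad_pos (H : Matrix Λ Λ ℂ) (hH : H.IsHermitian) (z : ℂ)
    (hz : 0 < z.im) {v : Λ → ℂ} (hv : v ≠ 0) :
    0 < (star v ⬝ᵥ (H - z • (1 : Matrix Λ Λ ℂ))⁻¹ *ᵥ v).im := by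
  have hA : IsUnit (H - z • (1 : Matrix Λ Λ ℂ)) := aux_resolvent_unit H hH z hz
  have hA' : IsUnit (H - z • (1 : Matrix Λ Λ ℂ)).det :=
    (Matrix.isUnit_iff_isUnit_det _).mp hA
  set A := H - z • (1 : Matrix Λ Λ ℂ) with hAdef
  set w := A⁻¹ *ᵥ v with hw
  have hvw : v = A *ᵥ w := by
    rw [hw, Matrix.mulVec_mulVec, Matrix.mul_nonsing_inv _ hA', Matrix.one_mulVec]
  have hwne : w ≠ 0 := by
    intro h0
    rw [h0, Matrix.mulVec_zero] at hvw
    exact hv hvw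
  have hconj : star v ⬝ᵥ A⁻¹ *ᵥ v = star w ⬝ᵥ (H - (starRingEnd ℂ) z • 1) *ᵥ w := by
    conv_lhs => rw [← hw, hvw]
    rw [star_mulVec, ← Matrix.dotProduct_mulVec]
    congr 1
    rw [hAdef, conjTranspose_sub, conjTranspose_smul, conjTranspose_one, hH.eq]
    rfl
  rw [hconj, aux_quad_im H hH _ w]
  have := aux_self_re_pos hwne
  simp only [Complex.conj_im]
  nlinarith

omit [DecidableEq Λ] in
lemma aux_sum_restrict (Δ : Finset Λ) (f : Λ → ℂ) (hf : ∀ x ∉ Δ, f x = 0) :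
    ∑ x, f x = ∑ i : Δ, f i := by
  rw [Finset.sum_coe_sort Δ f]
  exact (Finset.sum_subset (Finset.subset_univ Δ) (fun x _ hx => hf x hx)).symm

lemma aux_sub_unit (M : Matrix Λ Λ ℂ) (h : ∀ v : Λ → ℂ, v ≠ 0 → 0 < (star v ⬝ᵥ M *ᵥ v).im)
    (Δ : Finset Λ) :
    IsUnit (M.submatrix (fun i : Δ => (i : Λ)) (fun i : Δ => (i : Λ))) := by
  apply aux_isUnit_of_ker
  intro u hu
  by_contra hne
  set v : Λ → ℂ := fun x => if hx : x ∈ Δ then u ⟨x, hx⟩ else 0 with hvdef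
  have hvΔ : ∀ i : Δ, v (i : Λ) = u i := by
    rintro ⟨x, hx⟩
    show (if hx' : x ∈ Δ then u ⟨x, hx'⟩ else 0) = u ⟨x, hx⟩
    rw [dif_pos hx]
  have hvnot : ∀ x ∉ Δ, v x = 0 := by
    intro x hx
    show (if hx' : x ∈ Δ then u ⟨x, hx'⟩ else 0) = 0
    rw [dif_neg hx]
  have hvne : v ≠ 0 := by
    intro h0
    apply hne
    funext i
    have := congrFun h0 (i : Λ)
    rw [hvΔ i] at this
    simpa using this
  have hMv : ∀ i : Δ, (M *ᵥ v) (i : Λ) =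
      (M.submatrix (fun i : Δ => (i : Λ)) (fun i : Δ => (i : Λ)) *ᵥ u) i := by
    intro i
    show ∑ y, M (i : Λ) y * v y = _
    rw [aux_sum_restrict Δ _ (fun y hy => by rw [hvnot y hy, mul_zero])]
    simp only [Matrix.mulVec, dotProduct, submatrix_apply]
    exact Finset.sum_congr rfl (fun j _ => by rw [hvΔ j])
  have hq : star v ⬝ᵥ M *ᵥ v = 0 := by
    show ∑ x, star v x * (M *ᵥ v) x = 0
    rw [aux_sum_restrict Δ _ (fun x hx => by
      simp only [Pi.star_apply, hvnot x hx, star_zero, zero_mul])]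
    calc ∑ i : Δ, star v (i : Λ) * (M *ᵥ v) (i : Λ)
        = ∑ i : Δ, star (u i) *
            (M.submatrix (fun i : Δ => (i : Λ)) (fun i : Δ => (i : Λ)) *ᵥ u) i := by
          refine Finset.sum_congr rfl (fun i _ => ?_)
          rw [hMv i]
          simp only [Pi.star_apply, hvΔ i]
      _ = star u ⬝ᵥ (M.submatrix (fun i : Δ => (i : Λ)) (fun i : Δ => (i : Λ)) *ᵥ u) := rfl
      _ = 0 := by rw [hu, dotProduct_zero]
  have := h v hvne
  rw [hq] at this
  simp at this

end Aux

/-- Kreĭn's formula: if `H_Λ = H̃ + V_Δ` with `V_Δ` a real diagonal potential supported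
on `Δ ⊆ Λ`, then the `Δ×Δ` compression of the resolvent of `H̃` is invertible and
`g_Δ(z) = (V_Δ|_Δ + g̃_Δ(z)⁻¹)⁻¹`. -/
theorem krein_formula {Λ : Type*} [Fintype Λ] [DecidableEq Λ] (Δ : Finset Λ)
    (Ht : Matrix Λ Λ ℂ) (hHt : Ht.IsHermitian)
    (V : Λ → ℝ) (hV : ∀ x ∉ Δ, V x = 0)
    (z : ℂ) (hz : 0 < z.im) :
    IsUnit (((Ht - z • (1 : Matrix Λ Λ ℂ))⁻¹).submatrix
        (fun i : Δ => (i : Λ)) (fun i : Δ => (i : Λ))) ∧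
    (((Ht + Matrix.diagonal fun x => (V x : ℂ)) - z • (1 : Matrix Λ Λ ℂ))⁻¹).submatrix
        (fun i : Δ => (i : Λ)) (fun i : Δ => (i : Λ)) =
      (Matrix.diagonal (fun i : Δ => (V i : ℂ)) +
        (((Ht - z • (1 : Matrix Λ Λ ℂ))⁻¹).submatrix
          (fun i : Δ => (i : Λ)) (fun i : Δ => (i : Λ)))⁻¹)⁻¹ := by
  have hDherm : (Matrix.diagonal fun x => (V x : ℂ)).IsHermitian := by
    have hst : (star fun x => ((V x : ℝ) : ℂ)) = fun x => ((V x : ℝ) : ℂ) :=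
      funext fun x => Complex.conj_ofReal _
    rw [Matrix.IsHermitian, diagonal_conjTranspose, hst]
  have hBherm : (Ht + Matrix.diagonal fun x => (V x : ℂ)).IsHermitian := hHt.add hDherm
  set e : Δ → Λ := fun i => (i : Λ) with he
  set A := Ht - z • (1 : Matrix Λ Λ ℂ) with hAdef
  set B := (Ht + Matrix.diagonal fun x => (V x : ℂ)) - z • (1 : Matrix Λ Λ ℂ) with hBdef
  set D := Matrix.diagonal fun x => (V x : ℂ) with hDdef
  have hA : IsUnit A := aux_resolvent_unit Ht hHt z hz
  have hB : IsUnit B := aux_resolvent_unit _ hBherm z hz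
  have hA' : IsUnit A.det := (Matrix.isUnit_iff_isUnit_det _).mp hA
  have hB' : IsUnit B.det := (Matrix.isUnit_iff_isUnit_det _).mp hB
  set gt := (A⁻¹).submatrix e e with hgt_def
  set g := (B⁻¹).submatrix e e with hg_def
  set d := Matrix.diagonal (fun i : Δ => (V i : ℂ)) with hd_def
  have hgt : IsUnit gt :=
    aux_sub_unit _ (fun v hv => aux_inv_quad_pos Ht hHt z hz hv) Δ
  have hg : IsUnit g :=
    aux_sub_unit _ (fun v hv => aux_inv_quad_pos _ hBherm z hz hv) Δ
  have hgt' : IsUnit gt.det := (Matrix.isUnit_iff_isUnit_det _).mp hgt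
  have hg' : IsUnit g.det := (Matrix.isUnit_iff_isUnit_det _).mp hg
  refine ⟨hgt, ?_⟩
  -- resolvent identity
  have hBA : B = A + D := by rw [hBdef, hAdef]; abel
  have hres : A⁻¹ = B⁻¹ + A⁻¹ * D * B⁻¹ := by
    have h1 : A⁻¹ * B = 1 + A⁻¹ * D := by
      rw [hBA, mul_add, Matrix.nonsing_inv_mul _ hA']
    calc A⁻¹ = A⁻¹ * B * B⁻¹ := by
          rw [mul_assoc, Matrix.mul_nonsing_inv _ hB', mul_one]
      _ = (1 + A⁻¹ * D) * B⁻¹ := by rw [h1]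
      _ = B⁻¹ + A⁻¹ * D * B⁻¹ := by rw [add_mul, one_mul]
  -- compression of the correction term
  have hDcomp : (A⁻¹ * D * B⁻¹).submatrix e e = gt * d * g := by
    have entryL : ∀ x y : Λ, (A⁻¹ * D * B⁻¹) x y
        = ∑ k, A⁻¹ x k * ((V k : ℂ) * B⁻¹ k y) := by
      intro x y
      rw [mul_assoc, Matrix.mul_apply]
      refine Finset.sum_congr rfl fun k _ => ?_
      rw [hDdef, Matrix.diagonal_mul]
    have entryR : ∀ i j : Δ, (gt * d * g) i j
        = ∑ k : Δ, gt i k * ((V (k : Λ) : ℂ) * g k j) := by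
      intro i j
      rw [mul_assoc, Matrix.mul_apply]
      refine Finset.sum_congr rfl fun k _ => ?_
      rw [hd_def, Matrix.diagonal_mul]
    ext i j
    rw [submatrix_apply, entryL, entryR,
      aux_sum_restrict Δ _ (fun x hx => by
        rw [hV x hx, Complex.ofReal_zero, zero_mul, mul_zero])]
    exact Finset.sum_congr rfl fun k _ => rfl
  have hcomp : gt = g + gt * d * g := by
    conv_lhs => rw [hgt_def, hres]
    rw [← hDcomp, hg_def]
    ext i j
    simp [Matrix.add_apply]
  -- final algebra
  have hfact : gt = (1 + gt * d) * g := by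
    rw [add_mul, one_mul]; exact hcomp
  have hone : IsUnit (1 + gt * d) := by
    have heq : (1 + gt * d) = gt * g⁻¹ := by
      conv_rhs => rw [hfact]
      rw [mul_assoc, Matrix.mul_nonsing_inv _ hg', mul_one]
    rw [heq]
    exact hgt.mul ((Matrix.isUnit_nonsing_inv_iff).mpr hg)
  have hsum_unit : IsUnit (d + gt⁻¹) := by
    have heq : d + gt⁻¹ = gt⁻¹ * (1 + gt * d) := by
      rw [mul_add, mul_one, ← mul_assoc, Matrix.nonsing_inv_mul _ hgt', one_mul, add_comm]
    rw [heq]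
    exact ((Matrix.isUnit_nonsing_inv_iff).mpr hgt).mul hone
  have h2 : (1 : Matrix Δ Δ ℂ) = gt⁻¹ * g + d * g := by
    calc (1 : Matrix Δ Δ ℂ) = gt⁻¹ * gt := (Matrix.nonsing_inv_mul _ hgt').symm
      _ = gt⁻¹ * (g + gt * d * g) := by rw [← hcomp]
      _ = gt⁻¹ * g + d * g := by
          rw [mul_add, ← mul_assoc, ← mul_assoc, Matrix.nonsing_inv_mul _ hgt', one_mul]
  have hmain : (d + gt⁻¹) * g = 1 := by
    rw [add_mul, add_comm]
    exact h2.symm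
  exact (Matrix.inv_eq_right_inv hmain).symm
end

section
/- Positivity of imaginary parts: Let Λ be a finite index set, Δ ⊆ Λ nonempty, H a Hermitian matrix in Matrix Λ Λ ℂ, and z ∈ ℂ with Im z > 0. Let g_Δ(z) be the Δ×Δ submatrix of (H − z·1)⁻¹. Then (i) Im g_Δ(z) is positive definite, so in particular g_Δ(z) is invertible, and (ii) −Im( g_Δ(z)⁻¹ ) is positive definite. -/
open Matrix
open scoped ComplexOrder

/-- The "imaginary part" of a square complex matrix: `Im M = (M - Mᴴ)/(2i)`. -/
noncomputable def mIm {ι : Type*} (M : Matrix ι ι ℂ) : Matrix ι ι ℂ :=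
  (2 * Complex.I)⁻¹ • (M - Mᴴ)

section Aux

variable {n : Type*} [Fintype n] [DecidableEq n]

lemma mIm_quadform (A : Matrix n n ℂ) (v : n → ℂ) :
    star v ⬝ᵥ (mIm A) *ᵥ v =
      (2 * Complex.I)⁻¹ * (star v ⬝ᵥ A *ᵥ v - star (A *ᵥ v) ⬝ᵥ v) := by
  have h : star v ⬝ᵥ Aᴴ *ᵥ v = star (A *ᵥ v) ⬝ᵥ v := by
    rw [star_mulVec, dotProduct_mulVec]
  simp only [mIm, smul_mulVec, dotProduct_smul, sub_mulVec, dotProduct_sub, h,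
    smul_eq_mul, mul_sub]

lemma isUnit_of_mIm_quad_ne (A : Matrix n n ℂ)
    (h : ∀ v : n → ℂ, v ≠ 0 → star v ⬝ᵥ (mIm A) *ᵥ v ≠ 0) : IsUnit A := by
  rw [Matrix.isUnit_iff_isUnit_det, isUnit_iff_ne_zero]
  intro hdet
  obtain ⟨v, hv, hAv⟩ := (Matrix.exists_mulVec_eq_zero_iff).2 hdet
  apply h v hv
  rw [mIm_quadform, hAv]
  simp

lemma posDef_sandwich {m : Type*} [Fintype m] (M : Matrix n n ℂ) (hM : M.PosDef)
    (B : Matrix m n ℂ) (hB : Function.Injective (Bᴴ.mulVec)) :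
    (B * M * Bᴴ).PosDef := by
  refine Matrix.PosDef.of_dotProduct_mulVec_pos ?_ ?_
  · unfold Matrix.IsHermitian
    rw [conjTranspose_mul, conjTranspose_mul, conjTranspose_conjTranspose, hM.1.eq,
      Matrix.mul_assoc]
  · intro x hx
    have hx' : Bᴴ *ᵥ x ≠ 0 := by
      intro h
      exact hx (hB (by simpa using h))
    have key : star x ⬝ᵥ (B * M * Bᴴ) *ᵥ x = star (Bᴴ *ᵥ x) ⬝ᵥ M *ᵥ (Bᴴ *ᵥ x) := by
      rw [star_mulVec, conjTranspose_conjTranspose, ← Matrix.mulVec_mulVec,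
        ← Matrix.mulVec_mulVec, dotProduct_mulVec (star x) B]
    rw [key]
    exact hM.dotProduct_mulVec_pos hx'

lemma mulVec_inj_of_isUnit {A : Matrix n n ℂ} (hA : IsUnit A) :
    Function.Injective (A.mulVec) :=
  Matrix.mulVec_injective_iff_isUnit.2 hA

lemma mIm_inv (A : Matrix n n ℂ) (hA : IsUnit A) :
    mIm A⁻¹ = A⁻¹ * (-(mIm A)) * (A⁻¹)ᴴ := by
  have hdet : IsUnit A.det := (Matrix.isUnit_iff_isUnit_det A).1 hA
  have hdetH : IsUnit Aᴴ.det := by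
    rwa [Matrix.det_conjTranspose, isUnit_star]
  have h1 : Aᴴ * Aᴴ⁻¹ = 1 := Matrix.mul_nonsing_inv _ hdetH
  have h2 : A⁻¹ * A = 1 := Matrix.nonsing_inv_mul _ hdet
  unfold mIm
  rw [Matrix.conjTranspose_nonsing_inv]
  rw [← smul_neg, Matrix.mul_smul, Matrix.smul_mul]
  congr 1
  rw [neg_sub, Matrix.mul_sub, Matrix.sub_mul, Matrix.mul_assoc, h1, Matrix.mul_one,
    h2, Matrix.one_mul]

/-- From `-(mIm A)` positive definite: `A` is a unit and `mIm A⁻¹` is positive definite. -/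
lemma key_neg (A : Matrix n n ℂ) (h : (-(mIm A)).PosDef) :
    IsUnit A ∧ (mIm A⁻¹).PosDef := by
  have hU : IsUnit A := by
    apply isUnit_of_mIm_quad_ne
    intro v hv heq
    have := h.dotProduct_mulVec_pos hv
    rw [Matrix.neg_mulVec, dotProduct_neg, heq, neg_zero] at this
    exact lt_irrefl _ this
  refine ⟨hU, ?_⟩
  rw [mIm_inv A hU]
  apply posDef_sandwich _ h
  rw [Matrix.conjTranspose_nonsing_inv]
  apply mulVec_inj_of_isUnit
  rw [Matrix.isUnit_nonsing_inv_iff, Matrix.isUnit_iff_isUnit_det, Matrix.det_conjTranspose,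
    isUnit_star]
  exact (Matrix.isUnit_iff_isUnit_det A).1 hU

/-- From `mIm A` positive definite: `A` is a unit and `-(mIm A⁻¹)` is positive definite. -/
lemma key_pos (A : Matrix n n ℂ) (h : (mIm A).PosDef) :
    IsUnit A ∧ (-(mIm A⁻¹)).PosDef := by
  have hU : IsUnit A := by
    apply isUnit_of_mIm_quad_ne
    intro v hv heq
    have := h.dotProduct_mulVec_pos hv
    rw [heq] at this
    exact lt_irrefl _ this
  refine ⟨hU, ?_⟩
  rw [mIm_inv A hU]
  have : -(A⁻¹ * -mIm A * A⁻¹ᴴ) = A⁻¹ * mIm A * A⁻¹ᴴ := by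
    rw [Matrix.mul_neg, Matrix.neg_mul, neg_neg]
  rw [this]
  apply posDef_sandwich _ h
  rw [Matrix.conjTranspose_nonsing_inv]
  apply mulVec_inj_of_isUnit
  rw [Matrix.isUnit_nonsing_inv_iff, Matrix.isUnit_iff_isUnit_det, Matrix.det_conjTranspose,
    isUnit_star]
  exact (Matrix.isUnit_iff_isUnit_det A).1 hU

lemma posDef_submatrix_of_injective {m : Type*} [Fintype m] [DecidableEq m]
    (M : Matrix n n ℂ) (hM : M.PosDef) (f : m → n) (hf : Function.Injective f) :
    (M.submatrix f f).PosDef := by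
  have hrw : M.submatrix f f =
      ((1 : Matrix n n ℂ).submatrix f id) * M * ((1 : Matrix n n ℂ).submatrix f id)ᴴ := by
    ext i j
    simp [Matrix.mul_apply, Matrix.submatrix_apply, Matrix.one_apply, Finset.sum_ite_eq,
      eq_comm]
  rw [hrw]
  apply posDef_sandwich _ hM
  intro x y hxy
  funext i
  have h1 : ∀ v : m → ℂ, (((1 : Matrix n n ℂ).submatrix f id)ᴴ *ᵥ v) (f i) = v i := by
    intro v
    simp only [Matrix.mulVec, dotProduct, Matrix.conjTranspose_apply,
      Matrix.submatrix_apply, id_eq, Matrix.one_apply]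
    have hcongr : (∑ k, star (if f k = f i then (1 : ℂ) else 0) * v k) =
        ∑ k, (if k = i then v k else 0) :=
      Finset.sum_congr rfl (fun k _ => by
        by_cases hk : k = i <;> simp [hk, hf.eq_iff])
    rw [hcongr, Finset.sum_ite_eq' Finset.univ i v]
    simp
  have := congrFun hxy (f i)
  rwa [h1 x, h1 y] at this

end Aux

/-- Positivity of imaginary parts: for a Hermitian `H` and `Im z > 0`, the `Δ×Δ`
compression `g_Δ(z)` of the resolvent `(H − z)⁻¹` has positive definite imaginary part,
is invertible, and `−Im(g_Δ(z)⁻¹)` is positive definite. -/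
theorem im_resolvent_compression_posDef {Λ : Type*} [Fintype Λ] [DecidableEq Λ]
    (Δ : Finset Λ) (hΔ : Δ.Nonempty)
    (H : Matrix Λ Λ ℂ) (hH : H.IsHermitian) (z : ℂ) (hz : 0 < z.im) :
    (mIm (((H - z • (1 : Matrix Λ Λ ℂ))⁻¹).submatrix
        (fun i : Δ => (i : Λ)) (fun i : Δ => (i : Λ)))).PosDef ∧
    IsUnit (((H - z • (1 : Matrix Λ Λ ℂ))⁻¹).submatrix
        (fun i : Δ => (i : Λ)) (fun i : Δ => (i : Λ))) ∧
    (-(mIm ((((H - z • (1 : Matrix Λ Λ ℂ))⁻¹).submatrix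
        (fun i : Δ => (i : Λ)) (fun i : Δ => (i : Λ)))⁻¹))).PosDef := by
  set A : Matrix Λ Λ ℂ := H - z • (1 : Matrix Λ Λ ℂ) with hA
  -- compute mIm A
  have hmImA : -(mIm A) = (z.im : ℂ) • (1 : Matrix Λ Λ ℂ) := by
    have hAH : Aᴴ = H - (star z) • (1 : Matrix Λ Λ ℂ) := by
      rw [hA, conjTranspose_sub, hH.eq, conjTranspose_smul, conjTranspose_one]
    have hsub : A - Aᴴ = ((star z) - z) • (1 : Matrix Λ Λ ℂ) := by
      rw [hAH, hA, sub_sub_sub_cancel_left, ← sub_smul]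
    have hzz : star z - z = -(((2 * z.im : ℝ) : ℂ) * Complex.I) := by
      rw [Complex.star_def, ← Complex.sub_conj]
      ring
    rw [mIm, hsub, smul_smul, ← neg_smul, hzz]
    congr 1
    have h2i : (2 * Complex.I) ≠ 0 := by simp [Complex.I_ne_zero]
    push_cast
    field_simp
  have hmImAPos : (-(mIm A)).PosDef := by
    rw [hmImA]
    refine Matrix.PosDef.of_dotProduct_mulVec_pos ?_ ?_
    · unfold Matrix.IsHermitian
      rw [conjTranspose_smul, conjTranspose_one]
      congr 1
      simp [Complex.ext_iff]
    · intro x hx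
      rw [smul_mulVec, one_mulVec, dotProduct_smul]
      have hpos : 0 < star x ⬝ᵥ x := Matrix.dotProduct_star_self_pos_iff.2 hx
      have : (0 : ℂ) < (z.im : ℂ) := by exact_mod_cast hz
      exact smul_pos this hpos
  obtain ⟨hAunit, hGpos⟩ := key_neg A hmImAPos
  -- the compression
  set G : Matrix Λ Λ ℂ := A⁻¹ with hG
  set g : Matrix Δ Δ ℂ := G.submatrix (fun i : Δ => (i : Λ)) (fun i : Δ => (i : Λ)) with hg
  have hmImg : mIm g = (mIm G).submatrix (fun i : Δ => (i : Λ)) (fun i : Δ => (i : Λ)) := by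
    ext i j
    simp [mIm, hg]
  have hgPos : (mIm g).PosDef := by
    rw [hmImg]
    exact posDef_submatrix_of_injective _ hGpos _ Subtype.coe_injective
  obtain ⟨hgUnit, hgInvPos⟩ := key_pos g hgPos
  exact ⟨hgPos, hgUnit, hgInvPos⟩
end

section
/- Deterministic eigenvalue-counting bound: Let Λ be a finite index set, H a Hermitian matrix in Matrix Λ Λ ℂ, let a < b be real numbers, J = [a, b], and set z = ((a + b) + i(b − a))/2. Let N be the number of eigenvalues of H in J counted with multiplicity. Then for every positive integer n, C(N, n) ≤ (b − a)ⁿ · Σ_{Δ ⊆ Λ, |Δ| = n} det( Im g_Δ(z) ), where g_Δ(z) is the Δ×Δ submatrix of (H − z·1)⁻¹, C(N, n) is the binomial coefficient, and each det(Im g_Δ(z)) is a nonnegative real number. -/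
open Matrix
open scoped BigOperators

lemma det_piecewise_diag {R : Type*} [CommRing R] {Λ : Type*} [Fintype Λ] [DecidableEq Λ]
    (M : Matrix Λ Λ R) (d : Λ → R) (Δ : Finset Λ) :
    (Matrix.of fun i j => if i ∈ Δ then M i j else Matrix.diagonal d i j).det
      = (∏ i ∈ Δᶜ, d i) *
        (M.submatrix (fun i : Δ => (i : Λ)) (fun i : Δ => (i : Λ))).det := by
  classical
  let e := Equiv.sumCompl (fun x => x ∈ Δ)
  rw [← Matrix.det_submatrix_equiv_self e]
  have : (Matrix.of fun i j => if i ∈ Δ then M i j else Matrix.diagonal d i j).submatrix e e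
      = Matrix.fromBlocks
          (M.submatrix (fun i : Δ => (i : Λ)) (fun i : Δ => (i : Λ)))
          (M.submatrix (fun i : Δ => (i : Λ)) (fun i : {x // x ∉ Δ} => (i : Λ)))
          0
          (Matrix.diagonal fun i : {x // x ∉ Δ} => d i) := by
    ext i j
    cases i with
    | inl i => cases j with
      | inl j => simp [e, Equiv.sumCompl, i.2]
      | inr j => simp [e, Equiv.sumCompl, i.2]
    | inr i => cases j with
      | inl j =>
        have : (i : Λ) ≠ (j : Λ) := fun h => i.2 (h ▸ j.2)
        simp [e, Equiv.sumCompl, i.2, Matrix.diagonal_apply_ne _ this]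
      | inr j =>
        simp [e, Equiv.sumCompl, i.2, Matrix.diagonal, Subtype.ext_iff]
  rw [this, Matrix.det_fromBlocks_zero₂₁, Matrix.det_diagonal]
  rw [mul_comm]
  congr 1
  exact (Finset.prod_subtype Δᶜ (fun x => Finset.mem_compl) d).symm

lemma det_add_diag {R : Type*} [CommRing R] {Λ : Type*} [Fintype Λ] [DecidableEq Λ]
    (M : Matrix Λ Λ R) (d : Λ → R) :
    (M + Matrix.diagonal d).det
      = ∑ Δ : Finset Λ, (∏ i ∈ Δᶜ, d i) *
        (M.submatrix (fun i : Δ => (i : Λ)) (fun i : Δ => (i : Λ))).det := by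
  classical
  have h := (Matrix.detRowAlternating (n := Λ) (R := R)).toMultilinearMap.map_add_univ
    (fun i => M i) (fun i => Matrix.diagonal d i)
  have h2 : (M + Matrix.diagonal d).det
      = ∑ Δ : Finset Λ,
        (Matrix.of fun i j => if i ∈ Δ then M i j else Matrix.diagonal d i j).det := by
    refine h.trans (Finset.sum_congr rfl fun Δ _ => ?_)
    show Matrix.detRowAlternating _ = Matrix.detRowAlternating _
    congr 1
    ext i j
    by_cases hi : i ∈ Δ <;> simp [Finset.piecewise, hi]
  rw [h2]
  exact Finset.sum_congr rfl fun Δ _ => det_piecewise_diag M d Δ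

lemma sum_minors_eq_coeff {Λ : Type*} [Fintype Λ] [DecidableEq Λ]
    (M : Matrix Λ Λ ℂ) (n : ℕ) (hn : n ≤ Fintype.card Λ) :
    ∑ Δ ∈ ((Finset.univ : Finset Λ).powersetCard n),
        (M.submatrix (fun i : Δ => (i : Λ)) (fun i : Δ => (i : Λ))).det
      = ((M.map Polynomial.C + Matrix.diagonal fun _ => (Polynomial.X : Polynomial ℂ)).det).coeff
          (Fintype.card Λ - n) := by
  classical
  rw [det_add_diag, Polynomial.finset_sum_coeff]
  have hterm : ∀ Δ : Finset Λ,
      (((∏ _i ∈ Δᶜ, (Polynomial.X : Polynomial ℂ)) *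
        (((M.map Polynomial.C).submatrix (fun i : Δ => (i : Λ)) (fun i : Δ => (i : Λ))).det)).coeff
        (Fintype.card Λ - n))
      = if Δᶜ.card = Fintype.card Λ - n then
          (M.submatrix (fun i : Δ => (i : Λ)) (fun i : Δ => (i : Λ))).det else 0 := by
    intro Δ
    have hc : ((M.submatrix (fun i : Δ => (i : Λ)) (fun i : Δ => (i : Λ))).map ⇑Polynomial.C).det
        = Polynomial.C (M.submatrix (fun i : Δ => (i : Λ)) (fun i : Δ => (i : Λ))).det := by
      have := RingHom.map_det (Polynomial.C : ℂ →+* Polynomial ℂ)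
        (M.submatrix (fun i : Δ => (i : Λ)) (fun i : Δ => (i : Λ)))
      exact this.symm
    rw [Finset.prod_const, Matrix.submatrix_map, hc, mul_comm,
      Polynomial.C_mul_X_pow_eq_monomial, Polynomial.coeff_monomial]
  simp_rw [hterm]
  rw [Finset.sum_ite, Finset.sum_const_zero, add_zero]
  refine (Finset.sum_congr ?_ fun _ _ => rfl).symm
  ext Δ
  simp only [Finset.mem_powersetCard_univ, Finset.mem_filter, Finset.mem_univ, true_and,
    Finset.card_compl]
  have := Finset.card_le_univ Δ
  omega

lemma mIm_submatrix {Λ : Type*} (A : Matrix Λ Λ ℂ) {κ : Type*} (f : κ → Λ) :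
    mIm (A.submatrix f f) = (mIm A).submatrix f f := by
  ext i j
  simp [mIm, Matrix.submatrix_apply, Matrix.conjTranspose_apply]

/-- Deterministic eigenvalue-counting bound: if `N` is the number of eigenvalues of the
Hermitian matrix `H` in `J = [a,b]` (with multiplicity) and
`z = ((a+b) + i(b−a))/2`, then `C(N, n) ≤ |J|ⁿ Σ_{|Δ| = n} det Im g_Δ(z)`. -/
theorem choose_count_le_sum_det_im {Λ : Type*} [Fintype Λ] [DecidableEq Λ]
    (H : Matrix Λ Λ ℂ) (hH : H.IsHermitian) (a b : ℝ) (hab : a < b) (n : ℕ) (hn : 0 < n) :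
    ((((Finset.univ.filter fun i => hH.eigenvalues i ∈ Set.Icc a b).card).choose n : ℝ)) ≤
      (b - a) ^ n *
        ∑ Δ ∈ ((Finset.univ : Finset Λ).powersetCard n),
          ((mIm (((H - (((a + b : ℂ) + Complex.I * ((b : ℂ) - a)) / 2) •
              (1 : Matrix Λ Λ ℂ))⁻¹).submatrix
              (fun i : Δ => (i : Λ)) (fun i : Δ => (i : Λ)))).det).re := by
  classical
  set z : ℂ := (((a : ℂ) + b) + Complex.I * ((b : ℂ) - a)) / 2 with hz
  have hz_im : z.im = (b - a) / 2 := by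
    simp [hz, Complex.div_im, Complex.add_im, Complex.mul_im]
  have hz_re : z.re = (a + b) / 2 := by
    simp [hz, Complex.div_re, Complex.add_re, Complex.mul_re]
  set ev : Λ → ℝ := hH.eigenvalues with hev
  set U : Matrix Λ Λ ℂ := (hH.eigenvectorUnitary : Matrix Λ Λ ℂ) with hUdef
  have hU1 : U * star U = 1 := (Matrix.mem_unitaryGroup_iff).mp hH.eigenvectorUnitary.2
  have hU2 : star U * U = 1 := (Matrix.mem_unitaryGroup_iff').mp hH.eigenvectorUnitary.2
  set w : Λ → ℂ := fun k => (ev k : ℂ) - z with hwdef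
  have hw : ∀ k, w k ≠ 0 := by
    intro k h
    have : (w k).im = -z.im := by simp [hwdef]
    rw [h] at this
    simp [hz_im] at this
    linarith
  have key1 : H - z • (1 : Matrix Λ Λ ℂ) = U * Matrix.diagonal w * star U := by
    have hsp := hH.spectral_theorem
    rw [Unitary.conjStarAlgAut_apply] at hsp
    have h1 : z • (1 : Matrix Λ Λ ℂ) = U * Matrix.diagonal (fun _ => z) * star U := by
      rw [Matrix.smul_one_eq_diagonal]
      rw [show (U * Matrix.diagonal (fun _ => z) * star U)
          = U * (z • (1 : Matrix Λ Λ ℂ)) * star U by rw [Matrix.smul_one_eq_diagonal],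
        Matrix.mul_smul, Matrix.mul_one, Matrix.smul_mul, hU1, Matrix.smul_one_eq_diagonal]
    calc H - z • 1 = U * Matrix.diagonal (RCLike.ofReal ∘ ev) * star U
          - U * Matrix.diagonal (fun _ => z) * star U := by rw [← hsp, ← h1]
      _ = U * (Matrix.diagonal (RCLike.ofReal ∘ ev) - Matrix.diagonal (fun _ => z)) * star U := by
          noncomm_ring
      _ = U * Matrix.diagonal w * star U := by rw [Matrix.diagonal_sub]; rfl
  have key2 : (H - z • (1 : Matrix Λ Λ ℂ))⁻¹ = U * Matrix.diagonal (fun k => (w k)⁻¹) * star U := by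
    apply Matrix.inv_eq_right_inv
    rw [key1]
    calc U * Matrix.diagonal w * star U * (U * Matrix.diagonal (fun k => (w k)⁻¹) * star U)
        = U * (Matrix.diagonal w * (star U * U) * Matrix.diagonal (fun k => (w k)⁻¹)) * star U := by
          noncomm_ring
      _ = 1 := by
          rw [hU2, Matrix.mul_one, Matrix.diagonal_mul_diagonal]
          have : (fun k => w k * (w k)⁻¹) = fun _ => (1 : ℂ) := by
            funext k; exact mul_inv_cancel₀ (hw k)
          rw [this, Matrix.diagonal_one, Matrix.mul_one, hU1]
  set μ : Λ → ℝ := fun k => z.im / Complex.normSq (w k) with hmu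
  have hentry : ∀ k, (2 * Complex.I)⁻¹ * ((w k)⁻¹ - (starRingEnd ℂ) ((w k)⁻¹)) = ((μ k : ℝ) : ℂ) := by
    intro k
    have h1 : (w k)⁻¹ - (starRingEnd ℂ) ((w k)⁻¹) = (2 * ((w k)⁻¹).im : ℝ) * Complex.I :=
      Complex.sub_conj _
    have h2 : ((w k)⁻¹).im = μ k := by
      rw [Complex.inv_im, hmu]
      have : (w k).im = -z.im := by simp [hwdef]
      rw [this]
      ring_nf
    rw [h1, h2]
    have hI := Complex.I_ne_zero
    field_simp
    push_cast
    ring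
  have key3 : mIm ((H - z • (1 : Matrix Λ Λ ℂ))⁻¹)
      = U * Matrix.diagonal (fun k => ((μ k : ℝ) : ℂ)) * star U := by
    rw [mIm, key2]
    have hG : (U * Matrix.diagonal (fun k => (w k)⁻¹) * star U)ᴴ
        = U * Matrix.diagonal (fun k => (starRingEnd ℂ) ((w k)⁻¹)) * star U := by
      rw [Matrix.conjTranspose_mul, Matrix.conjTranspose_mul, Matrix.diagonal_conjTranspose]
      rw [show (star U)ᴴ = U from Matrix.conjTranspose_conjTranspose U, Matrix.mul_assoc]
      rfl
    rw [hG]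
    rw [show U * Matrix.diagonal (fun k => (w k)⁻¹) * star U
          - U * Matrix.diagonal (fun k => (starRingEnd ℂ) ((w k)⁻¹)) * star U
        = U * (Matrix.diagonal (fun k => (w k)⁻¹)
          - Matrix.diagonal (fun k => (starRingEnd ℂ) ((w k)⁻¹))) * star U by noncomm_ring]
    rw [Matrix.diagonal_sub]
    have hd : Matrix.diagonal (fun k => ((μ k : ℝ) : ℂ))
        = (2 * Complex.I)⁻¹ • Matrix.diagonal (fun i => (w i)⁻¹ - (starRingEnd ℂ) ((w i)⁻¹)) := by
      rw [← Matrix.diagonal_smul]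
      exact congrArg Matrix.diagonal (funext fun k => (hentry k).symm)
    rw [hd, Matrix.mul_smul, Matrix.smul_mul]
  set G := (H - z • (1 : Matrix Λ Λ ℂ))⁻¹ with hG
  set P : Polynomial ℂ := ∏ k, (Polynomial.X + Polynomial.C ((μ k : ℝ) : ℂ)) with hP
  have hmapmul1 : (U.map Polynomial.C) * ((star U).map Polynomial.C) = 1 := by
    rw [← Matrix.map_mul, hU1, Matrix.map_one _ (Polynomial.C_0) (Polynomial.C_1)]
  have key4 : ((mIm G).map Polynomial.C + Matrix.diagonal fun _ => (Polynomial.X : Polynomial ℂ)).det = P := by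
    rw [hG, key3]
    have hm : ((U * Matrix.diagonal (fun k => ((μ k : ℝ) : ℂ)) * star U).map Polynomial.C)
        = (U.map Polynomial.C) * Matrix.diagonal (fun k => Polynomial.C ((μ k : ℝ) : ℂ))
          * ((star U).map Polynomial.C) := by
      rw [Matrix.map_mul, Matrix.map_mul, Matrix.diagonal_map Polynomial.C_0]
    have hx : Matrix.diagonal (fun _ : Λ => (Polynomial.X : Polynomial ℂ))
        = (U.map Polynomial.C) * Matrix.diagonal (fun _ : Λ => (Polynomial.X : Polynomial ℂ))
          * ((star U).map Polynomial.C) := by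
      rw [← Matrix.smul_one_eq_diagonal, Matrix.mul_smul, Matrix.mul_one, Matrix.smul_mul,
        hmapmul1]
    rw [hm]
    conv_lhs => rw [hx]
    rw [show (U.map Polynomial.C) * Matrix.diagonal (fun k => Polynomial.C ((μ k : ℝ) : ℂ))
          * ((star U).map Polynomial.C)
        + (U.map Polynomial.C) * Matrix.diagonal (fun _ : Λ => (Polynomial.X : Polynomial ℂ))
          * ((star U).map Polynomial.C)
        = (U.map Polynomial.C) * (Matrix.diagonal (fun k => Polynomial.C ((μ k : ℝ) : ℂ))
          + Matrix.diagonal (fun _ : Λ => (Polynomial.X : Polynomial ℂ)))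
          * ((star U).map Polynomial.C) by noncomm_ring]
    rw [Matrix.diagonal_add, Matrix.det_mul, Matrix.det_mul, Matrix.det_diagonal]
    rw [mul_comm ((U.map Polynomial.C).det), mul_assoc, ← Matrix.det_mul, hmapmul1,
      Matrix.det_one, mul_one, hP]
    exact Finset.prod_congr rfl fun k _ => add_comm _ _
  by_cases hcard : n ≤ Fintype.card Λ
  · -- main case
    have hre : ∀ Δ : Finset Λ,
        mIm (G.submatrix (fun i : Δ => (i : Λ)) (fun i : Δ => (i : Λ)))
          = (mIm G).submatrix (fun i : Δ => (i : Λ)) (fun i : Δ => (i : Λ)) :=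
      fun Δ => mIm_submatrix G _
    have hsum : ∑ Δ ∈ ((Finset.univ : Finset Λ).powersetCard n),
        ((mIm G).submatrix (fun i : Δ => (i : Λ)) (fun i : Δ => (i : Λ))).det
        = ∑ t ∈ ((Finset.univ : Finset Λ).powersetCard n), ∏ k ∈ t, ((μ k : ℝ) : ℂ) := by
      rw [sum_minors_eq_coeff (mIm G) n hcard, key4, hP]
      have h1 : Fintype.card Λ - n ≤ (Finset.univ : Finset Λ).card := by
        rw [Finset.card_univ]; omega
      rw [Finset.prod_X_add_C_coeff Finset.univ _ h1]
      have h2 : (Finset.univ : Finset Λ).card - (Fintype.card Λ - n) = n := by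
        rw [Finset.card_univ]; omega
      rw [h2]
    have hRHS : ∑ Δ ∈ ((Finset.univ : Finset Λ).powersetCard n),
        ((mIm (G.submatrix (fun i : Δ => (i : Λ)) (fun i : Δ => (i : Λ)))).det).re
        = ∑ t ∈ ((Finset.univ : Finset Λ).powersetCard n), ∏ k ∈ t, μ k := by
      calc ∑ Δ ∈ ((Finset.univ : Finset Λ).powersetCard n),
            ((mIm (G.submatrix (fun i : Δ => (i : Λ)) (fun i : Δ => (i : Λ)))).det).re
          = (∑ Δ ∈ ((Finset.univ : Finset Λ).powersetCard n),
              ((mIm G).submatrix (fun i : Δ => (i : Λ)) (fun i : Δ => (i : Λ))).det).re := by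
            rw [Complex.re_sum]
            exact Finset.sum_congr rfl fun Δ _ => by rw [hre Δ]
        _ = (∑ t ∈ ((Finset.univ : Finset Λ).powersetCard n), ∏ k ∈ t, ((μ k : ℝ) : ℂ)).re := by
            rw [hsum]
        _ = ∑ t ∈ ((Finset.univ : Finset Λ).powersetCard n), ∏ k ∈ t, μ k := by
            simp_rw [← Complex.ofReal_prod]
            rw [← Complex.ofReal_sum, Complex.ofReal_re]
    rw [hRHS]
    -- now the purely real inequality
    have hba : (0 : ℝ) < b - a := sub_pos.mpr hab
    have hμ0 : ∀ k, 0 ≤ μ k := by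
      intro k
      exact div_nonneg (by rw [hz_im]; linarith) (Complex.normSq_nonneg _)
    set T := Finset.filter (fun i => ev i ∈ Set.Icc a b) (Finset.univ : Finset Λ) with hT
    have hμT : ∀ k ∈ T, (b - a)⁻¹ ≤ μ k := by
      intro k hk
      have hk' : ev k ∈ Set.Icc a b := (Finset.mem_filter.mp hk).2
      obtain ⟨hka, hkb⟩ := hk'
      have hns : Complex.normSq (w k) = (ev k - (a + b) / 2) ^ 2 + ((b - a) / 2) ^ 2 := by
        rw [Complex.normSq_apply]
        simp only [hwdef, Complex.sub_re, Complex.sub_im, Complex.ofReal_re, Complex.ofReal_im,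
          hz_re, hz_im]
        ring
      show (b - a)⁻¹ ≤ z.im / Complex.normSq (w k)
      rw [hz_im, hns]
      have hd0 : 0 < (ev k - (a + b) / 2) ^ 2 + ((b - a) / 2) ^ 2 := by positivity
      rw [inv_eq_one_div, div_le_div_iff₀ (by linarith) hd0]
      nlinarith [sq_nonneg (ev k - a), sq_nonneg (b - ev k)]
    have hsub : T.powersetCard n ⊆ (Finset.univ : Finset Λ).powersetCard n :=
      Finset.powersetCard_mono (Finset.subset_univ T)
    have h1 : ∑ t ∈ T.powersetCard n, ∏ k ∈ t, μ k
        ≤ ∑ t ∈ ((Finset.univ : Finset Λ).powersetCard n), ∏ k ∈ t, μ k :=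
      Finset.sum_le_sum_of_subset_of_nonneg hsub
        (fun t _ _ => Finset.prod_nonneg fun k _ => hμ0 k)
    have h2 : ∀ t ∈ T.powersetCard n, ((b - a)⁻¹) ^ n ≤ ∏ k ∈ t, μ k := by
      intro t ht
      obtain ⟨hts, htc⟩ := Finset.mem_powersetCard.mp ht
      calc ((b - a)⁻¹) ^ n = ∏ _k ∈ t, (b - a)⁻¹ := by rw [Finset.prod_const, htc]
        _ ≤ ∏ k ∈ t, μ k := Finset.prod_le_prod
            (fun _ _ => by positivity) (fun k hk => hμT k (hts hk))
    have h3 : (T.card.choose n : ℝ) * ((b - a)⁻¹) ^ n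
        ≤ ∑ t ∈ T.powersetCard n, ∏ k ∈ t, μ k := by
      have := Finset.card_nsmul_le_sum (T.powersetCard n)
        (fun t => ∏ k ∈ t, μ k) (((b - a)⁻¹) ^ n) h2
      rwa [Finset.card_powersetCard, nsmul_eq_mul] at this
    calc ((T.card.choose n : ℕ) : ℝ)
        = (b - a) ^ n * ((T.card.choose n : ℝ) * ((b - a)⁻¹) ^ n) := by
          rw [mul_comm ((T.card.choose n : ℝ)), ← mul_assoc, ← mul_pow,
            mul_inv_cancel₀ (ne_of_gt hba), one_pow, one_mul]
      _ ≤ (b - a) ^ n * ∑ t ∈ ((Finset.univ : Finset Λ).powersetCard n), ∏ k ∈ t, μ k := by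
          apply mul_le_mul_of_nonneg_left (h3.trans h1) (by positivity)
  · -- degenerate case: n > |Λ|
    have hemp : ((Finset.univ : Finset Λ).powersetCard n) = ∅ := by
      apply Finset.powersetCard_eq_empty.mpr
      rw [Finset.card_univ]; omega
    rw [hemp, Finset.sum_empty, mul_zero]
    have hN : (Finset.filter (fun i => ev i ∈ Set.Icc a b) Finset.univ).card < n := by
      have := Finset.card_le_univ (Finset.filter (fun i => ev i ∈ Set.Icc a b) Finset.univ)
      omega
    rw [Nat.choose_eq_zero_of_lt hN]
    norm_num
end
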